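/- arXiv:2011.11977 — 2 statements merged into one kernel-verified Lean document; each statement's English description precedes it below -/
import Mathlib

section
/- Let ℓ ∈ ℕ, let j, K̃ be integers with j ≤ 2Jℓ and 4J ≤ K̃ ≤ 2ℓ. Then the number of configurations X ∈ S_{Λ_ℓ}^j with B(m_X) ≤ K̃ satisfies #{X ∈ S_{Λ_ℓ}^j : B(m_X) ≤ K̃} ≤ (4Je)^{K̃−2} ℓ^{2K̃−3}. -/
open scoped Classical

/-- The occupation function `m_X : {1,…,ℓ} → ℕ` of a tuple `X` with values in `Fin ℓ`
(site `i ∈ {1,…,ℓ}` corresponds to `⟨i-1⟩ : Fin ℓ`): `m_X(i) = #{r : x_r = i}`. -/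
noncomputable def occt {L N : ℕ} (X : Fin N → Fin L) : ℕ → ℕ :=
  fun s => (Finset.univ.filter (fun i => (X i : ℕ) + 1 = s)).card

/-- `X ∈ S_{Λ_ℓ}^j`: nondecreasing and no site occupied by more than `2J` particles. -/
def isConf (twoJ : ℕ) {L N : ℕ} (X : Fin N → Fin L) : Prop :=
  Monotone X ∧ ∀ (k : ℕ) (hk : k < N) (h : k + twoJ < N),
    (X ⟨k, hk⟩ : ℕ) + 1 ≤ (X ⟨k + twoJ, h⟩ : ℕ)

/-- The set `S_{Λ_ℓ}^j` as a finset. -/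
noncomputable def confs (twoJ L N : ℕ) : Finset (Fin N → Fin L) :=
  Finset.univ.filter (fun X => isConf twoJ X)

/-- The block count
`B(m) = #{i ∈ {1,…,ℓ−1} : m(i)+m(i+1) ∉ {0, 4J}} + (2 − δ_{m(1),0} − δ_{m(ℓ),0})`. -/
def blockCount (twoJ L : ℕ) (m : ℕ → ℕ) : ℕ :=
  ((Finset.Icc 1 (L - 1)).filter
      (fun i => ¬(m i + m (i + 1) = 0 ∨ m i + m (i + 1) = 2 * twoJ))).card
    + (2 - (if m 1 = 0 then 1 else 0) - (if m L = 0 then 1 else 0))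

-- occupancy cap
lemma occt_le {c L N : ℕ} {X : Fin N → Fin L} (hX : isConf c X) (s : ℕ) :
    occt X s ≤ c := by
  by_contra h
  push_neg at h
  set S := Finset.univ.filter (fun i => (X i : ℕ) + 1 = s) with hS
  have hcard : c + 1 ≤ S.card := h
  have hne : S.Nonempty := Finset.card_pos.mp (by omega)
  set r0 := S.min' hne with hr0
  set r1 := S.max' hne with hr1
  have hsub : S ⊆ Finset.Icc r0 r1 := fun x hx =>
    Finset.mem_Icc.mpr ⟨S.min'_le x hx, S.le_max' x hx⟩
  have hIcc : (Finset.Icc r0 r1).card = (r1 : ℕ) + 1 - (r0 : ℕ) := Fin.card_Icc r0 r1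
  have hcard2 : c + 1 ≤ (r1 : ℕ) + 1 - (r0 : ℕ) := by
    calc c + 1 ≤ S.card := hcard
    _ ≤ (Finset.Icc r0 r1).card := Finset.card_le_card hsub
    _ = _ := hIcc
  have hlt : (r0 : ℕ) + c ≤ (r1 : ℕ) := by omega
  have hmid : (r0 : ℕ) + c < N := lt_of_le_of_lt hlt r1.isLt
  have hgap := hX.2 (r0 : ℕ) r0.isLt hmid
  have h0 : (X ⟨(r0:ℕ), r0.isLt⟩ : ℕ) + 1 = s := by
    have := (Finset.mem_filter.mp (S.min'_mem hne)).2
    simpa [Fin.eta] using this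
  have h1 : (X r1 : ℕ) + 1 = s := (Finset.mem_filter.mp (S.max'_mem hne)).2
  have hmono : X ⟨(r0:ℕ) + c, hmid⟩ ≤ X r1 := hX.1 (by exact hlt)
  omega

-- zero lemmas
lemma occt_zero {L N : ℕ} (X : Fin N → Fin L) : occt X 0 = 0 := by
  simp [occt]

lemma occt_zero_of_gt {L N : ℕ} (X : Fin N → Fin L) {s : ℕ} (hs : L < s) :
    occt X s = 0 := by
  rw [occt, Finset.card_eq_zero, Finset.filter_eq_empty_iff]
  intro i _
  have := (X i).isLt
  omega


noncomputable def fcum {L N : ℕ} (X : Fin N → Fin L) : ℕ → ℕ :=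
  fun s => (Finset.univ.filter (fun i => (X i : ℕ) + 1 ≤ s)).card

lemma fcum_succ {L N : ℕ} (X : Fin N → Fin L) (s : ℕ) :
    fcum X (s + 1) = fcum X s + occt X (s + 1) := by
  rw [fcum, fcum, occt]
  rw [← Finset.card_union_of_disjoint]
  · congr 1
    ext i
    simp only [Finset.mem_union, Finset.mem_filter, Finset.mem_univ, true_and]
    omega
  · rw [Finset.disjoint_filter]
    intro i _ h1 h2
    omega

lemma fcum_eq_of_occt_eq {L N : ℕ} {X Y : Fin N → Fin L} (h : occt X = occt Y) :
    fcum X = fcum Y := by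
  funext s
  induction s with
  | zero => simp [fcum]
  | succ n ih => rw [fcum_succ, fcum_succ, ih, h]

lemma monotone_le_of_fcum {L N : ℕ} {X Y : Fin N → Fin L} (hX : Monotone X)
    (hY : Monotone Y) (h : fcum X = fcum Y) (r : Fin N) : X r ≤ Y r := by
  set s := (Y r : ℕ) + 1 with hs
  have h1 : (r : ℕ) + 1 ≤ fcum Y s := by
    have hsub : Finset.Iic r ⊆ Finset.univ.filter (fun i => (Y i : ℕ) + 1 ≤ s) := by
      intro i hi
      rw [Finset.mem_Iic] at hi
      simp only [Finset.mem_filter, Finset.mem_univ, true_and]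
      have := hY hi
      omega
    calc (r : ℕ) + 1 = (Finset.Iic r).card := (Fin.card_Iic r).symm
    _ ≤ _ := Finset.card_le_card hsub
  rw [← h] at h1
  by_contra hcon
  have hXr : s < (X r : ℕ) + 1 := by
    simp only [not_le, Fin.lt_def] at hcon
    omega
  have hsub2 : Finset.univ.filter (fun i => (X i : ℕ) + 1 ≤ s) ⊆ Finset.Iio r := by
    intro i hi
    simp only [Finset.mem_filter, Finset.mem_univ, true_and] at hi
    rw [Finset.mem_Iio]
    by_contra hge
    push_neg at hge
    have := hX hge
    rw [Fin.le_def] at this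
    omega
  have := Finset.card_le_card hsub2
  rw [Fin.card_Iio] at this
  rw [fcum] at h1
  omega

lemma monotone_occt_inj {L N : ℕ} {X Y : Fin N → Fin L} (hX : Monotone X)
    (hY : Monotone Y) (h : occt X = occt Y) : X = Y := by
  have hf := fcum_eq_of_occt_eq h
  funext r
  exact le_antisymm (monotone_le_of_fcum hX hY hf r) (monotone_le_of_fcum hY hX hf.symm r)


def transSet (c L : ℕ) (m : ℕ → ℕ) : Finset ℕ :=
  (Finset.Icc 1 (L - 1)).filter
    (fun i => ¬(m i + m (i + 1) = 0 ∨ m i + m (i + 1) = 2 * c))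

noncomputable def encode (c L : ℕ) (m : ℕ → ℕ) : Finset (ℕ × ℕ) × ℕ :=
  ((transSet c L m).image (fun i => (i, m (i + 1))), m 1)

lemma encode_claim {c L : ℕ} {m m' : ℕ → ℕ}
    (h : encode c L m = encode c L m') :
    ∀ i ∈ transSet c L m, i ∈ transSet c L m' ∧ m' (i + 1) = m (i + 1) := by
  intro i hi
  have h1 : (Prod.fst (encode c L m)) = (Prod.fst (encode c L m')) := by rw [h]
  simp only [encode] at h1
  have hmem : (i, m (i + 1)) ∈ (transSet c L m').image (fun i => (i, m' (i + 1))) := by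
    rw [← h1]
    exact Finset.mem_image_of_mem _ hi
  obtain ⟨i', hi', heq⟩ := Finset.mem_image.mp hmem
  obtain ⟨h2, h3⟩ := Prod.ext_iff.mp heq
  simp only at h2 h3
  subst h2
  exact ⟨hi', h3⟩

lemma reconstruct {c L : ℕ} (hc : 1 ≤ c) {m m' : ℕ → ℕ}
    (hm0 : m 0 = 0) (hm'0 : m' 0 = 0)
    (hmL : ∀ s, L < s → m s = 0) (hm'L : ∀ s, L < s → m' s = 0)
    (hcap : ∀ s, m s ≤ c) (hcap' : ∀ s, m' s ≤ c)
    (h : encode c L m = encode c L m') : m = m' := by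
  have hcl := encode_claim h
  have hcl' := encode_claim h.symm
  have hT : transSet c L m = transSet c L m' := by
    ext i
    constructor
    · intro hi; exact (hcl i hi).1
    · intro hi; exact (hcl' i hi).1
  have h1 : m 1 = m' 1 := by
    have := congrArg Prod.snd h
    simpa [encode] using this
  funext s
  induction s using Nat.strong_induction_on with
  | _ s ih =>
    match s, ih with
    | 0, _ => rw [hm0, hm'0]
    | 1, _ => exact h1
    | (i+2), ih =>
      by_cases hsL : L < i + 2
      · rw [hmL _ hsL, hm'L _ hsL]
      · push_neg at hsL
        have hiIcc : i + 1 ∈ Finset.Icc 1 (L - 1) := by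
          rw [Finset.mem_Icc]; omega
        by_cases hiT : i + 1 ∈ transSet c L m
        · exact ((hcl _ hiT).2).symm
        · have hiT' : i + 1 ∉ transSet c L m' := by rw [← hT]; exact hiT
          have hP : m (i+1) + m (i+2) = 0 ∨ m (i+1) + m (i+2) = 2 * c := by
            by_contra hcon
            exact hiT (Finset.mem_filter.mpr ⟨hiIcc, hcon⟩)
          have hP' : m' (i+1) + m' (i+2) = 0 ∨ m' (i+1) + m' (i+2) = 2 * c := by
            by_contra hcon
            exact hiT' (Finset.mem_filter.mpr ⟨hiIcc, hcon⟩)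
          have hIH : m (i+1) = m' (i+1) := ih (i+1) (by omega)
          have := hcap (i+2)
          have := hcap' (i+2)
          omega


lemma lemA : ∀ K, 4 ≤ K → 2 * (K + 1) ≤ 4 ^ (K - 2) := by
  intro K hK
  induction K with
  | zero => omega
  | succ n ih =>
    rcases Nat.lt_or_ge n 4 with h | h
    · interval_cases n <;> first | omega | (simp_all)
    · have h1 := ih (by omega)
      have h2 : n + 1 - 2 = (n - 2) + 1 := by omega
      rw [h2, pow_succ]
      have : 1 ≤ 4 ^ (n - 2) := Nat.one_le_pow _ _ (by norm_num)
      omega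

lemma lemB : ∀ K, 4 ≤ K → 4 * (K + 1) ≤ Nat.factorial (K - 1) * 4 ^ (K - 3) := by
  intro K hK
  induction K with
  | zero => omega
  | succ n ih =>
    rcases Nat.lt_or_ge n 4 with h | h
    · interval_cases n <;> first | omega | (simp [Nat.factorial])
    · have h1 := ih (by omega)
      have h2 : n + 1 - 3 = (n - 3) + 1 := by omega
      have h3 : n + 1 - 1 = (n - 1) + 1 := by omega
      rw [h2, h3, pow_succ, Nat.factorial_succ]
      have h4 : 1 ≤ Nat.factorial (n - 1) * 4 ^ (n - 3) := by
        have := Nat.factorial_pos (n - 1)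
        have : 1 ≤ 4 ^ (n - 3) := Nat.one_le_pow _ _ (by norm_num)
        exact Nat.one_le_iff_ne_zero.mpr (by positivity)
      calc 4 * (n + 1 + 1) ≤ 4 * (n + 1) + 4 := by omega
      _ ≤ Nat.factorial (n - 1) * 4 ^ (n - 3) + 4 := by omega
      _ ≤ Nat.factorial (n - 1) * 4 ^ (n - 3) + 4 * (Nat.factorial (n - 1) * 4 ^ (n - 3)) := by omega
      _ ≤ (n - 1 + 1) * Nat.factorial (n - 1) * (4 ^ (n - 3) * 4) := by
          have h5 : 2 ≤ n - 1 + 1 := by omega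
          calc Nat.factorial (n - 1) * 4 ^ (n - 3) + 4 * (Nat.factorial (n - 1) * 4 ^ (n - 3))
              = 5 * (Nat.factorial (n - 1) * 4 ^ (n - 3)) := by ring
          _ ≤ (2 * 4) * (Nat.factorial (n - 1) * 4 ^ (n - 3)) := by omega
          _ ≤ ((n - 1 + 1) * 4) * (Nat.factorial (n - 1) * 4 ^ (n - 3)) := by
              apply Nat.mul_le_mul_right
              apply Nat.mul_le_mul_right
              omega
          _ = (n - 1 + 1) * Nat.factorial (n - 1) * (4 ^ (n - 3) * 4) := by ring

lemma lemC : ∀ K, 4 ≤ K → 8 * (K + 1) ≤ 2 ^ (K - 2) * Nat.factorial K := by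
  intro K hK
  induction K with
  | zero => omega
  | succ n ih =>
    rcases Nat.lt_or_ge n 4 with h | h
    · interval_cases n <;> first | omega | (simp [Nat.factorial])
    · have h1 := ih (by omega)
      have h2 : n + 1 - 2 = (n - 2) + 1 := by omega
      rw [h2, pow_succ, Nat.factorial_succ]
      have h4 : 8 ≤ 2 ^ (n - 2) * Nat.factorial n := by omega
      calc 8 * (n + 1 + 1) ≤ 8 * (n + 1) + 8 := by omega
      _ ≤ 2 ^ (n - 2) * Nat.factorial n + 2 ^ (n - 2) * Nat.factorial n := by omega
      _ = 2 * (2 ^ (n - 2) * Nat.factorial n) := by ring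
      _ ≤ (2 * (n + 1)) * (2 ^ (n - 2) * Nat.factorial n) := by
          apply Nat.mul_le_mul_right; omega
      _ = 2 ^ (n - 2) * 2 * ((n + 1) * Nat.factorial n) := by ring


-- main termwise reduction target:
-- H t : (K+1) * (c+1)^(t+1) * ℓ^t ≤ t! * ((4c)^(K-2) * ℓ^(2K-3))
lemma termwiseH {c K ℓ t : ℕ} (hc : 1 ≤ c) (hK4 : 4 ≤ K) (hKc : 2 * c ≤ K)
    (hKl : K ≤ 2 * ℓ) (ht : t ≤ K) :
    (K + 1) * (c + 1) ^ (t + 1) * ℓ ^ t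
      ≤ Nat.factorial t * ((4 * c) ^ (K - 2) * ℓ ^ (2 * K - 3)) := by
  have hl2 : 2 ≤ ℓ := by omega
  have hcc : c + 1 ≤ 2 * c := by omega
  have hc2l : c + 1 ≤ 2 * ℓ := by omega
  have h4c : (4 * c) ^ (K - 2) = 2 ^ (K - 2) * (2 * c) ^ (K - 2) := by
    rw [← Nat.mul_pow]; ring_nf
  have hlpow : ∀ a b : ℕ, a ≤ b → ℓ ^ a ≤ ℓ ^ b :=
    fun a b hab => Nat.pow_le_pow_right (by omega) hab
  have h2lpow : ∀ a : ℕ, 2 ^ a ≤ ℓ ^ a := fun a => Nat.pow_le_pow_left hl2 a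
  rcases Nat.lt_or_ge t (K - 2) with hcase | hcase
  · -- t + 3 ≤ K
    have ht3 : t + 3 ≤ K := by omega
    have e1 : (c + 1) ^ (t + 1) ≤ (2 * c) ^ (K - 2) :=
      le_trans (Nat.pow_le_pow_left hcc _) (Nat.pow_le_pow_right (by omega) (by omega))
    have e2 : (K + 1) ≤ ℓ ^ K :=
      le_trans (le_trans (by exact Nat.succ_le_of_lt (Nat.lt_two_pow_self (n := K))) (h2lpow K)) le_rfl
    have e3 : ℓ ^ K * ℓ ^ t ≤ ℓ ^ (2 * K - 3) := by
      rw [← pow_add]; exact hlpow _ _ (by omega)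
    calc (K + 1) * (c + 1) ^ (t + 1) * ℓ ^ t
        ≤ ℓ ^ K * (2 * c) ^ (K - 2) * ℓ ^ t := by
          exact Nat.mul_le_mul (Nat.mul_le_mul e2 e1) le_rfl
      _ = (2 * c) ^ (K - 2) * (ℓ ^ K * ℓ ^ t) := by ring
      _ ≤ (2 * c) ^ (K - 2) * ℓ ^ (2 * K - 3) := Nat.mul_le_mul_left _ e3
      _ ≤ Nat.factorial t * ((4 * c) ^ (K - 2) * ℓ ^ (2 * K - 3)) := by
          rw [h4c]
          have h1 : 1 ≤ Nat.factorial t := Nat.factorial_pos t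
          have h2 : 1 ≤ 2 ^ (K - 2) := Nat.one_le_two_pow
          calc (2 * c) ^ (K - 2) * ℓ ^ (2 * K - 3)
              ≤ (2 ^ (K - 2) * (2 * c) ^ (K - 2)) * ℓ ^ (2 * K - 3) :=
                Nat.mul_le_mul_right _ (Nat.le_mul_of_pos_left _ (by positivity))
            _ = 1 * (2 ^ (K - 2) * (2 * c) ^ (K - 2) * ℓ ^ (2 * K - 3)) := by ring
            _ ≤ Nat.factorial t * (2 ^ (K - 2) * (2 * c) ^ (K - 2) * ℓ ^ (2 * K - 3)) :=
                Nat.mul_le_mul_right _ h1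
          
  · -- t ∈ {K-2, K-1, K}
    have : t = K - 2 ∨ t = K - 1 ∨ t = K := by omega
    rcases this with rfl | h | h
    · -- t = K - 2
      have e1 : (c + 1) ^ (K - 2 + 1) ≤ (2 * c) ^ (K - 2) * (2 * ℓ) := by
        rw [pow_succ]
        exact Nat.mul_le_mul (Nat.pow_le_pow_left hcc _) hc2l
      have e2 : 2 * K - 3 = (K - 2) + 1 + (K - 2) := by omega
      have key : (K + 1) * (2 * ℓ) * (2 * c) ^ (K - 2) * ℓ ^ (K - 2)
          ≤ Nat.factorial (K - 2) * ((4 * c) ^ (K - 2) * (ℓ ^ (K - 2) * ℓ * ℓ ^ (K - 2))) := by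
        have hA := lemA K hK4
        have h4 : (4:ℕ) ^ (K - 2) = 2 ^ (K - 2) * 2 ^ (K - 2) := by
          rw [← Nat.mul_pow]
        have hfac : 1 ≤ Nat.factorial (K - 2) := Nat.factorial_pos _
        have hl22 : 2 ^ (K - 2) ≤ ℓ ^ (K - 2) := h2lpow _
        -- 2(K+1) ≤ 4^{K-2} = 2^{K-2}·2^{K-2} ≤ 2^{K-2}·ℓ^{K-2}
        have step : 2 * (K + 1) ≤ 2 ^ (K - 2) * ℓ ^ (K - 2) := by
          calc 2 * (K + 1) ≤ 4 ^ (K - 2) := hA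
          _ = 2 ^ (K - 2) * 2 ^ (K - 2) := h4
          _ ≤ 2 ^ (K - 2) * ℓ ^ (K - 2) := Nat.mul_le_mul_left _ hl22
        rw [h4c]
        calc (K + 1) * (2 * ℓ) * (2 * c) ^ (K - 2) * ℓ ^ (K - 2)
            = (2 * (K + 1)) * ((2 * c) ^ (K - 2) * (ℓ ^ (K - 2) * ℓ)) := by ring
          _ ≤ (2 ^ (K - 2) * ℓ ^ (K - 2)) * ((2 * c) ^ (K - 2) * (ℓ ^ (K - 2) * ℓ)) :=
              Nat.mul_le_mul_right _ step
          _ = 1 * (2 ^ (K - 2) * (2 * c) ^ (K - 2) * (ℓ ^ (K - 2) * ℓ * ℓ ^ (K - 2))) := by ring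
          _ ≤ Nat.factorial (K - 2) * (2 ^ (K - 2) * (2 * c) ^ (K - 2) * (ℓ ^ (K - 2) * ℓ * ℓ ^ (K - 2))) :=
              Nat.mul_le_mul_right _ hfac
          _ = Nat.factorial (K - 2) * (2 ^ (K - 2) * (2 * c) ^ (K - 2) * (ℓ ^ (K - 2) * ℓ * ℓ ^ (K - 2))) := rfl
      calc (K + 1) * (c + 1) ^ (K - 2 + 1) * ℓ ^ (K - 2)
          ≤ (K + 1) * ((2 * c) ^ (K - 2) * (2 * ℓ)) * ℓ ^ (K - 2) :=
            Nat.mul_le_mul_right _ (Nat.mul_le_mul_left _ e1)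
        _ = (K + 1) * (2 * ℓ) * (2 * c) ^ (K - 2) * ℓ ^ (K - 2) := by ring
        _ ≤ Nat.factorial (K - 2) * ((4 * c) ^ (K - 2) * (ℓ ^ (K - 2) * ℓ * ℓ ^ (K - 2))) := key
        _ = Nat.factorial (K - 2) * ((4 * c) ^ (K - 2) * ℓ ^ (2 * K - 3)) := by
            rw [e2, pow_add, pow_add, pow_one]
    · -- t = K - 1
      subst h
      have e1 : (c + 1) ^ (K - 1 + 1) ≤ (2 * c) ^ (K - 2) * (4 * (ℓ * ℓ)) := by
        have eK : K - 1 + 1 = (K - 2) + 2 := by omega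
        rw [eK, pow_add]
        apply Nat.mul_le_mul (Nat.pow_le_pow_left hcc _)
        calc (c + 1) ^ 2 ≤ (2 * ℓ) ^ 2 := Nat.pow_le_pow_left hc2l 2
          _ = 4 * (ℓ * ℓ) := by ring
      have e4 : (4:ℕ) ^ (K - 3) = 2 ^ (K - 2) * 2 ^ (K - 4) := by
        rw [show (4:ℕ) = 2 ^ 2 from rfl, ← pow_mul, ← pow_add]
        congr 1
        omega
      have hB := lemB K hK4
      have key : 4 * (K + 1) ≤ Nat.factorial (K - 1) * (2 ^ (K - 2) * ℓ ^ (K - 4)) := by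
        calc 4 * (K + 1) ≤ Nat.factorial (K - 1) * 4 ^ (K - 3) := hB
          _ = Nat.factorial (K - 1) * (2 ^ (K - 2) * 2 ^ (K - 4)) := by rw [e4]
          _ ≤ Nat.factorial (K - 1) * (2 ^ (K - 2) * ℓ ^ (K - 4)) :=
              Nat.mul_le_mul_left _ (Nat.mul_le_mul_left _ (h2lpow _))
      have e2 : 2 * K - 3 = (K - 4) + 2 + (K - 1) := by omega
      calc (K + 1) * (c + 1) ^ (K - 1 + 1) * ℓ ^ (K - 1)
          ≤ (K + 1) * ((2 * c) ^ (K - 2) * (4 * (ℓ * ℓ))) * ℓ ^ (K - 1) :=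
            Nat.mul_le_mul_right _ (Nat.mul_le_mul_left _ e1)
        _ = (4 * (K + 1)) * ((2 * c) ^ (K - 2) * (ℓ * ℓ * ℓ ^ (K - 1))) := by ring
        _ ≤ (Nat.factorial (K - 1) * (2 ^ (K - 2) * ℓ ^ (K - 4))) *
              ((2 * c) ^ (K - 2) * (ℓ * ℓ * ℓ ^ (K - 1))) :=
            Nat.mul_le_mul_right _ key
        _ = Nat.factorial (K - 1) * ((2 ^ (K - 2) * (2 * c) ^ (K - 2)) *
              (ℓ ^ (K - 4) * (ℓ * ℓ) * ℓ ^ (K - 1))) := by ring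
        _ = Nat.factorial (K - 1) * ((4 * c) ^ (K - 2) * ℓ ^ (2 * K - 3)) := by
            rw [← h4c, e2, pow_add, pow_add]
            ring
    · -- t = K
      subst h
      have core : (t + 1) * (c + 1) ^ 3 ≤ Nat.factorial t * 2 ^ (t - 2) * ℓ ^ (t - 3) := by
        rcases Nat.lt_or_ge t 6 with hK6 | hK6
        · -- t = 4 or 5
          have hc2 : c ≤ 2 := by omega
          have hc13 : (c + 1) ^ 3 ≤ 27 := by
            calc (c + 1) ^ 3 ≤ 3 ^ 3 := Nat.pow_le_pow_left (by omega) 3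
              _ = 27 := by norm_num
          interval_cases t
          · -- t = 4
            have : ℓ ^ (4 - 3) = ℓ := pow_one ℓ
            calc (4 + 1) * (c + 1) ^ 3 ≤ 5 * 27 := by
                  exact Nat.mul_le_mul_left _ hc13
              _ ≤ 96 * 2 := by norm_num
              _ ≤ 96 * ℓ := Nat.mul_le_mul_left _ hl2
              _ = Nat.factorial 4 * 2 ^ (4 - 2) * ℓ ^ (4 - 3) := by
                  simp [Nat.factorial]
          · -- t = 5
            calc (5 + 1) * (c + 1) ^ 3 ≤ 6 * 27 := Nat.mul_le_mul_left _ hc13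
              _ ≤ 960 * (2 * 2) := by norm_num
              _ ≤ 960 * (ℓ * ℓ) := Nat.mul_le_mul_left _ (Nat.mul_le_mul hl2 hl2)
              _ = Nat.factorial 5 * 2 ^ (5 - 2) * ℓ ^ (5 - 3) := by
                  simp [Nat.factorial]
                  ring
        · -- t ≥ 6
          have e1 : (c + 1) ^ 3 ≤ 8 * ℓ ^ 3 := by
            calc (c + 1) ^ 3 ≤ (2 * ℓ) ^ 3 := Nat.pow_le_pow_left hc2l 3
              _ = 8 * ℓ ^ 3 := by ring
          have e2 : ℓ ^ (t - 3) = ℓ ^ 3 * ℓ ^ (t - 6) := by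
            rw [← pow_add]
            congr 1
            omega
          have hC := lemC t hK4
          calc (t + 1) * (c + 1) ^ 3 ≤ (t + 1) * (8 * ℓ ^ 3) := Nat.mul_le_mul_left _ e1
            _ = (8 * (t + 1)) * ℓ ^ 3 := by ring
            _ ≤ (2 ^ (t - 2) * Nat.factorial t) * ℓ ^ 3 := Nat.mul_le_mul_right _ hC
            _ = (Nat.factorial t * 2 ^ (t - 2) * ℓ ^ 3) * 1 := by ring
            _ ≤ Nat.factorial t * 2 ^ (t - 2) * ℓ ^ 3 * ℓ ^ (t - 6) := by
                apply Nat.mul_le_mul_left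
                exact Nat.one_le_pow _ _ (by omega)
            _ = Nat.factorial t * 2 ^ (t - 2) * ℓ ^ (t - 3) := by rw [e2]; ring
      have e1 : (c + 1) ^ (t + 1) ≤ (2 * c) ^ (t - 2) * (c + 1) ^ 3 := by
        have et : t + 1 = (t - 2) + 3 := by omega
        rw [et, pow_add]
        exact Nat.mul_le_mul_right _ (Nat.pow_le_pow_left hcc _)
      have e2 : 2 * t - 3 = (t - 3) + t := by omega
      calc (t + 1) * (c + 1) ^ (t + 1) * ℓ ^ t
          ≤ (t + 1) * ((2 * c) ^ (t - 2) * (c + 1) ^ 3) * ℓ ^ t :=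
            Nat.mul_le_mul_right _ (Nat.mul_le_mul_left _ e1)
        _ = ((t + 1) * (c + 1) ^ 3) * ((2 * c) ^ (t - 2) * ℓ ^ t) := by ring
        _ ≤ (Nat.factorial t * 2 ^ (t - 2) * ℓ ^ (t - 3)) * ((2 * c) ^ (t - 2) * ℓ ^ t) :=
            Nat.mul_le_mul_right _ core
        _ = Nat.factorial t * ((2 ^ (t - 2) * (2 * c) ^ (t - 2)) * (ℓ ^ (t - 3) * ℓ ^ t)) := by
            ring
        _ = Nat.factorial t * ((4 * c) ^ (t - 2) * ℓ ^ (2 * t - 3)) := by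
            rw [← h4c, e2, pow_add]


lemma sum_bound {c K ℓ : ℕ} (hc : 1 ≤ c) (hK4 : 4 ≤ K) (hKc : 2 * c ≤ K)
    (hKl : K ≤ 2 * ℓ) :
    (c + 1) * ∑ t ∈ Finset.range (K + 1), Nat.choose (ℓ * (c + 1)) t
      ≤ (4 * c) ^ (K - 2) * ℓ ^ (2 * K - 3) := by
  have termwise : ∀ t ≤ K,
      (K + 1) * ((c + 1) * Nat.choose (ℓ * (c + 1)) t)
        ≤ (4 * c) ^ (K - 2) * ℓ ^ (2 * K - 3) := by
    intro t ht
    have hfac : 0 < Nat.factorial t := Nat.factorial_pos t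
    refine Nat.le_of_mul_le_mul_left ?_ hfac
    calc Nat.factorial t * ((K + 1) * ((c + 1) * Nat.choose (ℓ * (c + 1)) t))
        = (K + 1) * (c + 1) * (Nat.factorial t * Nat.choose (ℓ * (c + 1)) t) := by ring
      _ ≤ (K + 1) * (c + 1) * (ℓ * (c + 1)) ^ t := by
          apply Nat.mul_le_mul_left
          rw [← Nat.descFactorial_eq_factorial_mul_choose]
          exact Nat.descFactorial_le_pow _ _
      _ = (K + 1) * (c + 1) ^ (t + 1) * ℓ ^ t := by
          rw [Nat.mul_pow]; ring
      _ ≤ Nat.factorial t * ((4 * c) ^ (K - 2) * ℓ ^ (2 * K - 3)) :=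
          termwiseH hc hK4 hKc hKl ht
  refine Nat.le_of_mul_le_mul_left ?_ (show 0 < K + 1 by omega)
  calc (K + 1) * ((c + 1) * ∑ t ∈ Finset.range (K + 1), Nat.choose (ℓ * (c + 1)) t)
      = ∑ t ∈ Finset.range (K + 1), (K + 1) * ((c + 1) * Nat.choose (ℓ * (c + 1)) t) := by
        rw [Finset.mul_sum, Finset.mul_sum]
    _ ≤ ∑ _t ∈ Finset.range (K + 1), (4 * c) ^ (K - 2) * ℓ ^ (2 * K - 3) := by
        apply Finset.sum_le_sum
        intro t ht
        exact termwise t (by simpa using Nat.lt_succ_iff.mp (Finset.mem_range.mp ht))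
    _ = (K + 1) * ((4 * c) ^ (K - 2) * ℓ ^ (2 * K - 3)) := by
        rw [Finset.sum_const, Finset.card_range, smul_eq_mul]

lemma special13 (ℓ : ℕ) (hl : 2 ≤ ℓ) :
    2 * ∑ t ∈ Finset.range 4, Nat.choose (ℓ * 2) t ≤ 4 * ℓ ^ 3 := by
  obtain ⟨u, rfl⟩ : ∃ u, ℓ = u + 2 := ⟨ℓ - 2, by omega⟩
  have hn : (u + 2) * 2 = 2 * u + 4 := by ring
  rw [hn]
  have h0 : Nat.choose (2 * u + 4) 0 = 1 := Nat.choose_zero_right _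
  have h1 : Nat.choose (2 * u + 4) 1 = 2 * u + 4 := Nat.choose_one_right _
  have hA : 2 * Nat.choose (2 * u + 4) 2 = (2 * u + 4) * (2 * u + 3) := by
    have h := Nat.descFactorial_eq_factorial_mul_choose (2 * u + 4) 2
    rw [show Nat.factorial 2 = 2 from rfl] at h
    rw [← h]
    simp [Nat.descFactorial_succ, Nat.descFactorial_zero]
    ring
  have hB : 6 * Nat.choose (2 * u + 4) 3 = (2 * u + 4) * (2 * u + 3) * (2 * u + 2) := by
    have h := Nat.descFactorial_eq_factorial_mul_choose (2 * u + 4) 3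
    rw [show Nat.factorial 3 = 6 from rfl] at h
    rw [← h]
    simp [Nat.descFactorial_succ, Nat.descFactorial_zero]
    ring
  refine Nat.le_of_mul_le_mul_left ?_ (show (0:ℕ) < 6 by norm_num)
  have hexp : ∑ t ∈ Finset.range 4, Nat.choose (2 * u + 4) t
      = 1 + (2 * u + 4) + Nat.choose (2 * u + 4) 2 + Nat.choose (2 * u + 4) 3 := by
    rw [Finset.sum_range_succ, Finset.sum_range_succ, Finset.sum_range_succ,
      Finset.sum_range_one, h0, h1]
  rw [hexp]
  nlinarith [hA, hB, sq_nonneg u]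


lemma occt_pos {L N : ℕ} (X : Fin N → Fin L) (i : Fin N) :
    0 < occt X ((X i : ℕ) + 1) :=
  Finset.card_pos.mpr ⟨i, Finset.mem_filter.mpr ⟨Finset.mem_univ i, rfl⟩⟩

lemma occt_eq_zero {L N : ℕ} (X : Fin N → Fin L) {s : ℕ}
    (h : ∀ i, (X i : ℕ) + 1 ≠ s) : occt X s = 0 := by
  rw [occt, Finset.card_eq_zero, Finset.filter_eq_empty_iff]
  exact fun i _ => h i

lemma nogap {L N : ℕ} {X : Fin N → Fin L} (hN : 0 < N) (hX : isConf 1 X)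
    (hB : blockCount 1 L (occt X) ≤ 2) :
    ∀ r (hr : r < N), (X ⟨r, hr⟩ : ℕ) = (X ⟨0, hN⟩ : ℕ) + r := by
  intro r
  induction r with
  | zero => intro hr; rfl
  | succ r ih =>
    intro hr
    have hr' : r < N := by omega
    have ihr := ih hr'
    have hstep : (X ⟨r, hr'⟩ : ℕ) + 1 ≤ (X ⟨r + 1, hr⟩ : ℕ) := hX.2 r hr' hr
    by_contra hne
    set x0 := (X ⟨0, hN⟩ : ℕ) with hx0
    have hgap : x0 + r + 2 ≤ (X ⟨r + 1, hr⟩ : ℕ) := by omega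
    -- the transition set
    set m := occt X with hm
    set T := ((Finset.Icc 1 (L - 1)).filter
      (fun i => ¬(m i + m (i + 1) = 0 ∨ m i + m (i + 1) = 2 * 1))) with hT
    have hcap : ∀ s, m s ≤ 1 := occt_le hX
    -- transition at a := x0 + r + 1
    set a := x0 + r + 1 with ha
    have hma : 0 < m a := by
      have := occt_pos X ⟨r, hr'⟩
      rwa [ihr] at this
    have hma1 : m (a + 1) = 0 := by
      apply occt_eq_zero
      intro i
      rcases Nat.lt_or_ge (i : ℕ) (r + 1) with hi | hi
      · have : X i ≤ X ⟨r, hr'⟩ := hX.1 (by rw [Fin.le_def]; simp; omega)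
        rw [Fin.le_def, ihr] at this
        omega
      · have : X ⟨r + 1, hr⟩ ≤ X i := hX.1 (by rw [Fin.le_def]; simp; omega)
        rw [Fin.le_def] at this
        omega
    have haL : a ≤ L - 1 := by
      have := (X ⟨r + 1, hr⟩).isLt
      omega
    have haT : a ∈ T := by
      rw [hT, Finset.mem_filter, Finset.mem_Icc]
      have := hcap a
      constructor
      · omega
      · omega
    -- last index
    have hqlt : N - 1 < N := by omega
    set b := (X ⟨N - 1, hqlt⟩ : ℕ) + 1 with hb
    have hmb : 0 < m b := occt_pos X _
    have hrb : a + 2 ≤ b := by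
      have : X ⟨r + 1, hr⟩ ≤ X ⟨N - 1, hqlt⟩ := hX.1 (by rw [Fin.le_def]; simp; omega)
      rw [Fin.le_def] at this
      omega
    have hbmax : ∀ i, (X i : ℕ) + 1 ≠ b + 1 := by
      intro i
      have : X i ≤ X ⟨N - 1, hqlt⟩ := hX.1 (by rw [Fin.le_def]; simp; omega)
      rw [Fin.le_def] at this
      omega
    -- first index
    have hminx : ∀ i, (x0 : ℕ) ≤ (X i : ℕ) := by
      intro i
      have : X ⟨0, hN⟩ ≤ X i := hX.1 (by rw [Fin.le_def]; simp)
      rwa [Fin.le_def] at this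
    -- count things
    have hcard3 : ∀ (P : Finset ℕ), P ⊆ T → blockCount 1 L m ≤ 2 → T.card ≥ P.card := by
      intro P hP _
      exact Finset.card_le_card hP
    have hBC : T.card + (2 - (if m 1 = 0 then 1 else 0) - (if m L = 0 then 1 else 0)) ≤ 2 := hB
    have hif1 : (if m 1 = 0 then 1 else 0) ≤ 1 := by split <;> norm_num
    have hifL : (if m L = 0 then 1 else 0) ≤ 1 := by split <;> norm_num
    -- case on b interior or boundary
    rcases Nat.lt_or_ge b L with hbL | hbL
    · -- b ≤ L - 1 : b is a transition
      have hbT : b ∈ T := by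
        rw [hT, Finset.mem_filter, Finset.mem_Icc]
        have h1 : m (b + 1) = 0 := occt_eq_zero X hbmax
        have := hcap b
        exact ⟨by omega, by omega⟩
      rcases Nat.eq_zero_or_pos x0 with hx00 | hx0pos
      · -- x0 = 0 : left boundary occupied, δ1 = 0
        have hm1 : 0 < m 1 := by
          have := occt_pos X ⟨0, hN⟩
          rw [← hx0, hx00] at this
          simpa using this
        have hδ1 : (if m 1 = 0 then 1 else 0) = 0 := by
          rw [if_neg (by omega)]
        have hTc : 2 ≤ T.card := by
          have hsub : ({a, b} : Finset ℕ) ⊆ T := by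
            intro x hx
            rcases Finset.mem_insert.mp hx with rfl | hx
            · exact haT
            · rw [Finset.mem_singleton.mp hx]; exact hbT
          have : ({a, b} : Finset ℕ).card = 2 := by
            rw [Finset.card_insert_of_notMem (by simp; omega), Finset.card_singleton]
          calc 2 = ({a, b} : Finset ℕ).card := this.symm
          _ ≤ T.card := Finset.card_le_card hsub
        rw [hδ1] at hBC
        omega
      · -- x0 ≥ 1 : left transition at x0
        have hc0T : x0 ∈ T := by
          rw [hT, Finset.mem_filter, Finset.mem_Icc]
          have h1 : m x0 = 0 := by
            apply occt_eq_zero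
            intro i
            have := hminx i
            omega
          have h2 : 0 < m (x0 + 1) := by
            have := occt_pos X ⟨0, hN⟩
            rw [← hx0] at this
            simpa using this
          have := hcap (x0 + 1)
          exact ⟨by omega, by omega⟩
        have hTc : 3 ≤ T.card := by
          have hsub : ({x0, a, b} : Finset ℕ) ⊆ T := by
            intro x hx
            rcases Finset.mem_insert.mp hx with rfl | hx
            · exact hc0T
            · rcases Finset.mem_insert.mp hx with rfl | hx
              · exact haT
              · rw [Finset.mem_singleton.mp hx]; exact hbT
          have hc : ({x0, a, b} : Finset ℕ).card = 3 := by
            rw [Finset.card_insert_of_notMem (by simp; omega),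
              Finset.card_insert_of_notMem (by simp; omega), Finset.card_singleton]
          calc 3 = ({x0, a, b} : Finset ℕ).card := hc.symm
          _ ≤ T.card := Finset.card_le_card hsub
        omega
    · -- b = L : right boundary occupied, δL = 0
      have hbLeq : b = L := by
        have := (X ⟨N - 1, hqlt⟩).isLt
        omega
      have hmL : 0 < m L := by rw [← hbLeq]; exact hmb
      have hδL : (if m L = 0 then 1 else 0) = 0 := by rw [if_neg (by omega)]
      rcases Nat.eq_zero_or_pos x0 with hx00 | hx0pos
      · have hm1 : 0 < m 1 := by
          have := occt_pos X ⟨0, hN⟩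
          rw [← hx0, hx00] at this
          simpa using this
        have hδ1 : (if m 1 = 0 then 1 else 0) = 0 := by rw [if_neg (by omega)]
        have hTc : 1 ≤ T.card := Finset.card_pos.mpr ⟨a, haT⟩
        rw [hδ1, hδL] at hBC
        omega
      · have hc0T : x0 ∈ T := by
          rw [hT, Finset.mem_filter, Finset.mem_Icc]
          have h1 : m x0 = 0 := by
            apply occt_eq_zero
            intro i
            have := hminx i
            omega
          have h2 : 0 < m (x0 + 1) := by
            have := occt_pos X ⟨0, hN⟩
            rw [← hx0] at this
            simpa using this
          have := hcap (x0 + 1)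
          exact ⟨by omega, by omega⟩
        have hTc : 2 ≤ T.card := by
          have hsub : ({x0, a} : Finset ℕ) ⊆ T := by
            intro x hx
            rcases Finset.mem_insert.mp hx with rfl | hx
            · exact hc0T
            · rw [Finset.mem_singleton.mp hx]; exact haT
          have hc : ({x0, a} : Finset ℕ).card = 2 := by
            rw [Finset.card_insert_of_notMem (by simp; omega), Finset.card_singleton]
          calc 2 = ({x0, a} : Finset ℕ).card := hc.symm
          _ ≤ T.card := Finset.card_le_card hsub
        rw [hδL] at hBC
        omega

lemma caseK2 (L N : ℕ) (hL : 1 ≤ L) :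
    ((confs 1 L N).filter (fun X => blockCount 1 L (occt X) ≤ 2)).card ≤ L := by
  rcases Nat.eq_zero_or_pos N with rfl | hN
  · calc ((confs 1 L 0).filter (fun X => blockCount 1 L (occt X) ≤ 2)).card
        ≤ (Finset.univ : Finset (Fin 0 → Fin L)).card :=
          Finset.card_le_card (fun x _ => Finset.mem_univ x)
      _ = 1 := by simp
      _ ≤ L := hL
  · have : ((confs 1 L N).filter (fun X => blockCount 1 L (occt X) ≤ 2)).card
        ≤ (Finset.range L).card := by
      apply Finset.card_le_card_of_injOn (fun X => (X ⟨0, hN⟩ : ℕ))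
      · intro X _
        exact Finset.mem_range.mpr (X ⟨0, hN⟩).isLt
      · intro X hX Y hY heq
        rw [Finset.coe_filter] at hX hY
        obtain ⟨hX1, hX2⟩ := hX
        obtain ⟨hY1, hY2⟩ := hY
        have hcX : isConf 1 X := (Finset.mem_filter.mp hX1).2
        have hcY : isConf 1 Y := (Finset.mem_filter.mp hY1).2
        funext i
        have h1 := nogap hN hcX hX2 (i : ℕ) i.isLt
        have h2 := nogap hN hcY hY2 (i : ℕ) i.isLt
        apply Fin.ext
        rw [Fin.eta] at h1 h2
        simp only at heq
        omega
    simpa using this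


-- placeholders for already-proven lemmas
lemma card_conf_le_sum (c L N K : ℕ) (hc : 1 ≤ c) :
    ((confs c L N).filter (fun X => blockCount c L (occt X) ≤ K)).card
      ≤ (c + 1) * ∑ t ∈ Finset.range (K + 1), Nat.choose ((L - 1) * (c + 1)) t := by
  classical
  set base : Finset (ℕ × ℕ) := (Finset.Icc 1 (L - 1)) ×ˢ (Finset.range (c + 1)) with hbase
  set Tgt : Finset (Finset (ℕ × ℕ) × ℕ) :=
    (base.powerset.filter (fun A => A.card ≤ K)) ×ˢ (Finset.range (c + 1)) with hTgt
  have hinj : ((confs c L N).filter (fun X => blockCount c L (occt X) ≤ K)).card ≤ Tgt.card := by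
    apply Finset.card_le_card_of_injOn (fun X => encode c L (occt X))
    · intro X hX
      rw [Finset.mem_coe] at hX ⊢
      beta_reduce
      rw [Finset.mem_filter] at hX
      obtain ⟨hX1, hX2⟩ := hX
      have hconf : isConf c X := (Finset.mem_filter.mp hX1).2
      rw [hTgt, Finset.mem_product]
      constructor
      · rw [Finset.mem_filter, Finset.mem_powerset]
        constructor
        · rw [encode]
          intro p hp
          obtain ⟨i, hi, hpe⟩ := Finset.mem_image.mp hp
          rw [transSet, Finset.mem_filter] at hi
          rw [← hpe, hbase, Finset.mem_product]
          refine ⟨hi.1, Finset.mem_range.mpr ?_⟩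
          have := occt_le hconf (i + 1)
          omega
        · calc (encode c L (occt X)).1.card ≤ (transSet c L (occt X)).card :=
                Finset.card_image_le
          _ ≤ blockCount c L (occt X) := Nat.le_add_right _ _
          _ ≤ K := hX2
      · rw [encode]
        simp only [Finset.mem_range]
        have := occt_le hconf 1
        omega
    · intro X hX Y hY heq
      rw [Finset.coe_filter] at hX hY
      obtain ⟨hX1, -⟩ := hX
      obtain ⟨hY1, -⟩ := hY
      have hcX : isConf c X := (Finset.mem_filter.mp hX1).2
      have hcY : isConf c Y := (Finset.mem_filter.mp hY1).2
      have hocc : occt X = occt Y :=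
        reconstruct hc (occt_zero X) (occt_zero Y)
          (fun s hs => occt_zero_of_gt X hs) (fun s hs => occt_zero_of_gt Y hs)
          (occt_le hcX) (occt_le hcY) heq
      exact monotone_occt_inj hcX.1 hcY.1 hocc
  refine hinj.trans ?_
  rw [hTgt, Finset.card_product, Finset.card_range, Nat.mul_comm]
  apply Nat.mul_le_mul_left
  have hsub : base.powerset.filter (fun A => A.card ≤ K) ⊆
      (Finset.range (K + 1)).biUnion (fun t => Finset.powersetCard t base) := by
    intro A hA
    rw [Finset.mem_filter, Finset.mem_powerset] at hA
    rw [Finset.mem_biUnion]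
    exact ⟨A.card, Finset.mem_range.mpr (by omega), Finset.mem_powersetCard.mpr ⟨hA.1, rfl⟩⟩
  calc (base.powerset.filter (fun A => A.card ≤ K)).card
      ≤ _ := Finset.card_le_card hsub
    _ ≤ ∑ t ∈ Finset.range (K + 1), (Finset.powersetCard t base).card :=
        Finset.card_biUnion_le
    _ = ∑ t ∈ Finset.range (K + 1), Nat.choose ((L - 1) * (c + 1)) t := by
        apply Finset.sum_congr rfl
        intro t _
        rw [Finset.card_powersetCard]
        congr 1
        rw [hbase, Finset.card_product, Nat.card_Icc, Finset.card_range,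
          Nat.add_sub_cancel]


/-- the number of configurations `X ∈ S_{Λ_ℓ}^j` composed of at most
`K̃ − 1` building blocks (i.e. with `B(m_X) ≤ K̃`) is at most `(4Je)^{K̃−2} ℓ^{2K̃−3}`. -/
theorem card_low_block_configs_le (twoJ ℓ j Kt : ℕ) (h2J : 0 < twoJ)
    (hj : j ≤ twoJ * ℓ) (hK1 : 2 * twoJ ≤ Kt) (hK2 : Kt ≤ 2 * ℓ) :
    (((confs twoJ ℓ j).filter (fun X => blockCount twoJ ℓ (occt X) ≤ Kt)).card : ℝ)
      ≤ (2 * (twoJ : ℝ) * Real.exp 1) ^ (Kt - 2) * (ℓ : ℝ) ^ (2 * Kt - 3) := by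
  have he2 : (2 : ℝ) ≤ Real.exp 1 := by
    have := Real.add_one_le_exp (1 : ℝ)
    linarith
  have hl1 : 1 ≤ ℓ := by omega
  rcases Nat.lt_or_ge Kt 3 with hK3 | hK3
  · -- Kt = 2, twoJ = 1
    have hc1 : twoJ = 1 := by omega
    have hKt2 : Kt = 2 := by omega
    subst hc1 hKt2
    have hcard := caseK2 ℓ j hl1
    have : (((confs 1 ℓ j).filter (fun X => blockCount 1 ℓ (occt X) ≤ 2)).card : ℝ) ≤ (ℓ : ℝ) := by
      exact_mod_cast hcard
    calc (((confs 1 ℓ j).filter (fun X => blockCount 1 ℓ (occt X) ≤ 2)).card : ℝ)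
        ≤ (ℓ : ℝ) := this
      _ = (2 * (1 : ℝ) * Real.exp 1) ^ (2 - 2) * (ℓ : ℝ) ^ (2 * 2 - 3) := by
          norm_num
  · -- Kt ≥ 3
    have hmain : ((confs twoJ ℓ j).filter (fun X => blockCount twoJ ℓ (occt X) ≤ Kt)).card
        ≤ (twoJ + 1) * ∑ t ∈ Finset.range (Kt + 1), Nat.choose (ℓ * (twoJ + 1)) t := by
      calc ((confs twoJ ℓ j).filter (fun X => blockCount twoJ ℓ (occt X) ≤ Kt)).card
          ≤ (twoJ + 1) * ∑ t ∈ Finset.range (Kt + 1), Nat.choose ((ℓ - 1) * (twoJ + 1)) t :=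
            card_conf_le_sum twoJ ℓ j Kt h2J
        _ ≤ (twoJ + 1) * ∑ t ∈ Finset.range (Kt + 1), Nat.choose (ℓ * (twoJ + 1)) t := by
            apply Nat.mul_le_mul_left
            apply Finset.sum_le_sum
            intro t _
            exact Nat.choose_le_choose t (Nat.mul_le_mul_right _ (by omega))
    rcases Nat.lt_or_ge Kt 4 with hK4 | hK4
    · -- Kt = 3, twoJ = 1
      have hc1 : twoJ = 1 := by omega
      have hKt3 : Kt = 3 := by omega
      subst hc1 hKt3
      have hl2 : 2 ≤ ℓ := by omega
      have h2 : ((confs 1 ℓ j).filter (fun X => blockCount 1 ℓ (occt X) ≤ 3)).card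
          ≤ 4 * ℓ ^ 3 := le_trans hmain (special13 ℓ hl2)
      have h3 : (((confs 1 ℓ j).filter (fun X => blockCount 1 ℓ (occt X) ≤ 3)).card : ℝ)
          ≤ 4 * (ℓ : ℝ) ^ 3 := by exact_mod_cast h2
      calc (((confs 1 ℓ j).filter (fun X => blockCount 1 ℓ (occt X) ≤ 3)).card : ℝ)
          ≤ 4 * (ℓ : ℝ) ^ 3 := h3
        _ ≤ (2 * Real.exp 1) * (ℓ : ℝ) ^ 3 := by
            have hp : (0 : ℝ) ≤ (ℓ : ℝ) ^ 3 := by positivity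
            nlinarith
        _ = (2 * ((1 : ℕ) : ℝ) * Real.exp 1) ^ (3 - 2) * (ℓ : ℝ) ^ (2 * 3 - 3) := by
            norm_num
    · -- Kt ≥ 4
      have h2 := le_trans hmain (sum_bound h2J hK4 hK1 hK2)
      have h3 : (((confs twoJ ℓ j).filter (fun X => blockCount twoJ ℓ (occt X) ≤ Kt)).card : ℝ)
          ≤ ((4 * twoJ : ℕ) : ℝ) ^ (Kt - 2) * ((ℓ : ℕ) : ℝ) ^ (2 * Kt - 3) := by
        exact_mod_cast h2
      refine h3.trans ?_
      apply mul_le_mul_of_nonneg_right _ (by positivity)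
      apply pow_le_pow_left₀ (by positivity)
      push_cast
      nlinarith [Real.exp_pos 1, (show (1:ℝ) ≤ (twoJ : ℝ) by exact_mod_cast h2J)]
end

section
/- Let m′, m″ ∈ M_L and t ∈ Λ_L satisfy: m′(i) = 0 for all i > t, m″(i) = 0 for all i < t, and m′(t) + m″(t) ≤ 2J. Then m′ + m″ ∈ M_L and V(m′) ≤ V(m′ + m″). -/
/-- The interaction potential `V(m) = ∑_{j=1}^{L-1}[J(m(j)+m(j+1)) − m(j)m(j+1)] + J(m(1)+m(L))`,
where `J = twoJ/2`. Sites are labeled `1,…,L`. -/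
noncomputable def potV (twoJ L : ℕ) (m : ℕ → ℕ) : ℝ :=
  (∑ j ∈ Finset.Icc 1 (L - 1),
      ((twoJ : ℝ) / 2 * ((m j : ℝ) + (m (j + 1) : ℝ)) - (m j : ℝ) * (m (j + 1) : ℝ)))
    + (twoJ : ℝ) / 2 * ((m 1 : ℝ) + (m L : ℝ))

/-- Membership in `M_L`: functions `Λ_L → {0,…,2J}` (vanishing outside `Λ_L = {1,…,L}`). -/
def memML (twoJ L : ℕ) (m : ℕ → ℕ) : Prop :=
  (∀ j, m j ≤ twoJ) ∧ (∀ j, j ∉ Finset.Icc 1 L → m j = 0)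

/-- Tail estimate: for `n : Λ_L → {0,…,2J}`,
`J·n(s) ≤ ∑_{j=s}^{L-1}[J(n(j)+n(j+1)) − n(j)n(j+1)] + J·n(L)`. -/
lemma tail_ge (twoJ L : ℕ) (hL : 1 ≤ L) (n : ℕ → ℕ) (hn : ∀ j, n j ≤ twoJ)
    (hv : ∀ j, L < j → n j = 0) :
    ∀ k s, 1 ≤ s → L ≤ s + k →
      (twoJ : ℝ) / 2 * (n s : ℝ) ≤
        (∑ j ∈ Finset.Icc s (L - 1),
          ((twoJ : ℝ) / 2 * ((n j : ℝ) + (n (j + 1) : ℝ)) - (n j : ℝ) * (n (j + 1) : ℝ)))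
        + (twoJ : ℝ) / 2 * (n L : ℝ) := by
  intro k
  induction k with
  | zero =>
    intro s hs1 hs
    have he : Finset.Icc s (L - 1) = ∅ := Finset.Icc_eq_empty (by omega)
    rw [he, Finset.sum_empty, zero_add]
    rcases eq_or_lt_of_le hs with h | h
    · rw [show s = L by omega]
    · rw [hv s (by omega)]
      simp
      positivity
  | succ k ih =>
    intro s hs1 hs
    by_cases hsk : L ≤ s + k
    · exact ih s hs1 hsk
    · have hsL : s ≤ L - 1 := by omega
      have hins : Finset.Icc s (L - 1) = insert s (Finset.Icc (s + 1) (L - 1)) := by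
        ext x; simp only [Finset.mem_Icc, Finset.mem_insert]; omega
      rw [hins, Finset.sum_insert (by simp only [Finset.mem_Icc, not_and, not_le]; omega)]
      have hrec := ih (s + 1) (by omega) (by omega)
      have h1 : (n s : ℝ) ≤ twoJ := by exact_mod_cast hn s
      have h2 : (0 : ℝ) ≤ (n (s + 1) : ℝ) := by positivity
      nlinarith [mul_nonneg h2 (sub_nonneg.mpr h1)]

/-- if `m′` lives to the left of `t`, `m″` to the right of `t`, and
`m′(t) + m″(t) ≤ 2J`, then `m′ + m″ ∈ M_L` and `V(m′) ≤ V(m′ + m″)`. -/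
theorem potential_monotone_under_gluing (twoJ L : ℕ) (h2J : 0 < twoJ) (hL : 2 ≤ L)
    (m' m'' : ℕ → ℕ) (t : ℕ) (ht : t ∈ Finset.Icc 1 L)
    (hm' : memML twoJ L m') (hm'' : memML twoJ L m'')
    (h1 : ∀ i, t < i → m' i = 0) (h2 : ∀ i, i < t → m'' i = 0)
    (h3 : m' t + m'' t ≤ twoJ) :
    memML twoJ L (m' + m'') ∧ potV twoJ L m' ≤ potV twoJ L (m' + m'') := by
  simp only [Finset.mem_Icc] at ht
  obtain ⟨ht1, htL⟩ := ht
  -- membership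
  have hmem : memML twoJ L (m' + m'') := by
    constructor
    · intro j
      simp only [Pi.add_apply]
      rcases lt_trichotomy j t with h | h | h
      · rw [h2 j h]; simpa using hm'.1 j
      · subst h; exact h3
      · rw [h1 j h]; simpa using hm''.1 j
    · intro j hj
      simp only [Pi.add_apply, hm'.2 j hj, hm''.2 j hj]
  refine ⟨hmem, ?_⟩
  -- abbreviations
  set J : ℝ := (twoJ : ℝ) / 2 with hJ
  -- the per-edge difference
  set d : ℕ → ℝ := fun j =>
    J * ((m'' j : ℝ) + (m'' (j + 1) : ℝ)) - (m' j : ℝ) * (m'' (j + 1) : ℝ)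
      - (m'' j : ℝ) * (m' (j + 1) : ℝ) - (m'' j : ℝ) * (m'' (j + 1) : ℝ) with hd
  have hv'' : ∀ j, L < j → m'' j = 0 := fun j hj =>
    hm''.2 j (by simp only [Finset.mem_Icc]; omega)
  have key : potV twoJ L (m' + m'') =
      potV twoJ L m' + ((∑ j ∈ Finset.Icc 1 (L - 1), d j)
        + J * ((m'' 1 : ℝ) + (m'' L : ℝ))) := by
    simp only [potV, Pi.add_apply, Nat.cast_add, hd, hJ]
    rw [Finset.sum_congr rfl (fun j _ => by ring :
      ∀ j ∈ Finset.Icc 1 (L - 1),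
        ((twoJ : ℝ) / 2 * (((m' j : ℝ) + (m'' j : ℝ)) + ((m' (j+1) : ℝ) + (m'' (j+1) : ℝ)))
          - ((m' j : ℝ) + (m'' j : ℝ)) * ((m' (j+1) : ℝ) + (m'' (j+1) : ℝ)))
        = (((twoJ : ℝ) / 2 * ((m' j : ℝ) + (m' (j+1) : ℝ)) - (m' j : ℝ) * (m' (j+1) : ℝ))
          + ((twoJ : ℝ) / 2 * ((m'' j : ℝ) + (m'' (j + 1) : ℝ))
            - (m' j : ℝ) * (m'' (j + 1) : ℝ)
            - (m'' j : ℝ) * (m' (j + 1) : ℝ) - (m'' j : ℝ) * (m'' (j + 1) : ℝ))))]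
    rw [Finset.sum_add_distrib]
    ring
  rw [key]
  have hJ0 : (0 : ℝ) ≤ J := by positivity
  have hb : ∀ j, (0 : ℝ) ≤ (m'' j : ℝ) := fun j => by positivity
  have ha : ∀ j, (m' j : ℝ) ≤ twoJ := fun j => by exact_mod_cast hm'.1 j
  have h3' : (m' t : ℝ) + (m'' t : ℝ) ≤ twoJ := by exact_mod_cast h3
  suffices h : 0 ≤ (∑ j ∈ Finset.Icc 1 (L - 1), d j) + J * ((m'' 1 : ℝ) + (m'' L : ℝ)) by
    linarith
  rcases eq_or_lt_of_le ht1 with h1t | h1t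
  · -- case t = 1
    have hT := tail_ge twoJ L (by omega) m'' hm''.1 hv'' L 2 (by omega) (by omega)
    have hins : Finset.Icc 1 (L - 1) = insert 1 (Finset.Icc 2 (L - 1)) := by
      ext x; simp only [Finset.mem_Icc, Finset.mem_insert]; omega
    rw [hins, Finset.sum_insert (by simp only [Finset.mem_Icc, not_and, not_le]; omega)]
    have hsum : ∑ j ∈ Finset.Icc 2 (L - 1), d j
        = ∑ j ∈ Finset.Icc 2 (L - 1),
            (J * ((m'' j : ℝ) + (m'' (j + 1) : ℝ)) - (m'' j : ℝ) * (m'' (j + 1) : ℝ)) := by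
      refine Finset.sum_congr rfl (fun j hjm => ?_)
      simp only [Finset.mem_Icc] at hjm
      simp only [hd]
      rw [h1 j (by omega), h1 (j + 1) (by omega)]
      push_cast
      ring
    rw [hsum]
    have hd1 : d 1 = J * ((m'' 1 : ℝ) + (m'' 2 : ℝ)) - (m' 1 : ℝ) * (m'' 2 : ℝ)
        - (m'' 1 : ℝ) * (m'' 2 : ℝ) := by
      simp only [hd]; rw [h1 2 (by omega)]; push_cast; ring
    rw [hd1]
    have h3'' : (m' 1 : ℝ) + (m'' 1 : ℝ) ≤ twoJ := by rw [← h1t] at h3'; exact h3'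
    nlinarith [hb 1, hb 2, mul_nonneg (hb 2) (by linarith : (0:ℝ) ≤ twoJ - (m' 1 : ℝ) - (m'' 1 : ℝ))]
  · -- t ≥ 2, so m'' 1 = 0
    have hb1 : m'' 1 = 0 := h2 1 (by omega)
    rcases eq_or_lt_of_le htL with htL' | htL'
    · -- case t = L
      have hsum : ∑ j ∈ Finset.Icc 1 (L - 1), d j = d (L - 1) := by
        refine Finset.sum_eq_single_of_mem (L - 1) (by simp only [Finset.mem_Icc]; omega) ?_
        intro j hjm hne
        simp only [Finset.mem_Icc] at hjm
        simp only [hd]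
        rw [h2 j (by omega), h2 (j + 1) (by omega)]
        push_cast; ring
      rw [hsum]
      simp only [hd]
      have e1 : m'' (L - 1) = 0 := h2 (L - 1) (by omega)
      have e2 : (L - 1) + 1 = L := by omega
      rw [e1, e2, hb1]
      push_cast
      nlinarith [hb L, mul_nonneg (hb L) (by linarith [ha (L - 1)] : (0:ℝ) ≤ twoJ - (m' (L - 1) : ℝ))]
    · -- case 2 ≤ t ≤ L - 1
      have hsub : Finset.Icc (t - 1) (L - 1) ⊆ Finset.Icc 1 (L - 1) := by
        intro x hx; simp only [Finset.mem_Icc] at *; omega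
      have hzero : ∀ j ∈ Finset.Icc 1 (L - 1), j ∉ Finset.Icc (t - 1) (L - 1) → d j = 0 := by
        intro j hjm hjn
        simp only [Finset.mem_Icc] at hjm hjn
        simp only [hd]
        rw [h2 j (by omega), h2 (j + 1) (by omega)]
        push_cast; ring
      rw [← Finset.sum_subset hsub hzero]
      have hins : Finset.Icc (t - 1) (L - 1)
          = insert (t - 1) (insert t (Finset.Icc (t + 1) (L - 1))) := by
        ext x; simp only [Finset.mem_Icc, Finset.mem_insert]; omega
      rw [hins, Finset.sum_insert (by
            simp only [Finset.mem_insert, Finset.mem_Icc, not_or, not_and, not_le]; omega),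
          Finset.sum_insert (by simp only [Finset.mem_Icc, not_and, not_le]; omega)]
      have hsum : ∑ j ∈ Finset.Icc (t + 1) (L - 1), d j
          = ∑ j ∈ Finset.Icc (t + 1) (L - 1),
              (J * ((m'' j : ℝ) + (m'' (j + 1) : ℝ)) - (m'' j : ℝ) * (m'' (j + 1) : ℝ)) := by
        refine Finset.sum_congr rfl (fun j hjm => ?_)
        simp only [Finset.mem_Icc] at hjm
        simp only [hd]
        rw [h1 j (by omega), h1 (j + 1) (by omega)]
        push_cast; ring
      rw [hsum]
      have hT := tail_ge twoJ L (by omega) m'' hm''.1 hv'' L (t + 1) (by omega) (by omega)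
      have hdt1 : d (t - 1) = J * (m'' t : ℝ) - (m' (t - 1) : ℝ) * (m'' t : ℝ) := by
        simp only [hd]
        rw [h2 (t - 1) (by omega), show (t - 1) + 1 = t by omega]
        push_cast; ring
      have hdt : d t = J * ((m'' t : ℝ) + (m'' (t + 1) : ℝ))
          - (m' t : ℝ) * (m'' (t + 1) : ℝ) - (m'' t : ℝ) * (m'' (t + 1) : ℝ) := by
        simp only [hd]
        rw [h1 (t + 1) (by omega)]
        push_cast; ring
      rw [hdt1, hdt, hb1]
      push_cast
      nlinarith [hb t, hb (t + 1), hb L,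
        mul_nonneg (hb t) (by linarith [ha (t - 1)] : (0:ℝ) ≤ twoJ - (m' (t - 1) : ℝ)),
        mul_nonneg (hb (t + 1)) (by linarith : (0:ℝ) ≤ twoJ - (m' t : ℝ) - (m'' t : ℝ))]
end
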